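/- For every pair (ξ, x) ∈ Hom(ℤ/n, ℂˣ) × ℤ/n, the element A_(ξ,x) := Σ_{i=0}^{n-1} ξ(i) e_i^∨ ⊗ e_{i+x} of End(V_n) is a nonzero simultaneous eigenvector for the adjoint action of ℤ/n × Hom(ℤ/n, ℂˣ): conjugation by φ_n(1; a, α) multiplies A_(ξ,x) by ξ(a)·α(x). -/

import Mathlib

/-! The finite Heisenberg group `H_n = μ_n × ℤ/n × Hom(ℤ/n, ℂˣ)`. -/

/-- The underlying set of the finite Heisenberg group:
`μ_n × (ℤ/n) × Hom(ℤ/n, ℂˣ)`, where `μ_n = rootsOfUnity n ℂ` and characters of `ℤ/n`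
are additive characters with values in `ℂˣ`. -/
abbrev Heis (n : ℕ) : Type :=
  (rootsOfUnity n ℂ) × ZMod n × AddChar (ZMod n) ℂˣ

/-- The value of any character of `ℤ/n` is an `n`-th root of unity. -/
theorem addChar_val_mem (n : ℕ) (α : AddChar (ZMod n) ℂˣ) (a : ZMod n) :
    α a ∈ rootsOfUnity n ℂ := by
  rw [mem_rootsOfUnity, ← AddChar.map_nsmul_eq_pow, nsmul_eq_mul, ZMod.natCast_self, zero_mul,
    AddChar.map_zero_eq_one]

/-- The Heisenberg multiplication `(λ; a, α)·(λ'; a', α') = (λλ'α'(a); a + a', αα')`. -/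
def heisMul {n : ℕ} (x y : Heis n) : Heis n :=
  (x.1 * y.1 * ⟨y.2.2 x.2.1, addChar_val_mem n y.2.2 x.2.1⟩, x.2.1 + y.2.1, x.2.2 * y.2.2)

/-- The identity element `(1; 0, 𝟙)`. -/
def heisOne {n : ℕ} : Heis n := (1, 0, 1)

/-- The inverse `(λ; a, α)⁻¹ = (λ⁻¹ α(a); -a, α⁻¹)`. -/
def heisInv {n : ℕ} (x : Heis n) : Heis n :=
  (x.1⁻¹ * ⟨x.2.2 x.2.1, addChar_val_mem n x.2.2 x.2.1⟩, -x.2.1, x.2.2⁻¹)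


/-- The Schrödinger representation of `H_n` on `V_n = Map(ℤ/n, ℂ)`:
`(φ_n(λ; a, α)f)(x) = λ·α(x)·f(x + a)`. -/
def schroedinger {n : ℕ} (g : Heis n) : (ZMod n → ℂ) →ₗ[ℂ] (ZMod n → ℂ) where
  toFun f := fun x => ((g.1 : ℂˣ) : ℂ) * ((g.2.2 x : ℂˣ) : ℂ) * f (x + g.2.1)
  map_add' f₁ f₂ := by funext x; simp [mul_add]
  map_smul' c f := by funext x; simp [Pi.smul_apply, smul_eq_mul]; ring

open scoped BigOperators

/-- The rank one endomorphism `e_i^∨ ⊗ e_j` of `V_n = Map(ℤ/n, ℂ)`,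
sending `f` to `f(i)·e_j`. -/
def rankOne {n : ℕ} (i j : ZMod n) : (ZMod n → ℂ) →ₗ[ℂ] (ZMod n → ℂ) where
  toFun f := fun y => if y = j then f i else 0
  map_add' f g := by funext y; by_cases h : y = j <;> simp [h]
  map_smul' c f := by funext y; by_cases h : y = j <;> simp [h]

/-- The element `A_(ξ,x) = Σ_{i} ξ(i) e_i^∨ ⊗ e_{i+x}` of `End(V_n)`. -/
noncomputable def Aelt {n : ℕ} [NeZero n] (ξ : AddChar (ZMod n) ℂˣ) (x : ZMod n) :
    (ZMod n → ℂ) →ₗ[ℂ] (ZMod n → ℂ) :=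
  ∑ i : ZMod n, ((ξ i : ℂˣ) : ℂ) • rankOne i (i + x)


lemma Aelt_apply {n : ℕ} [NeZero n] (ξ : AddChar (ZMod n) ℂˣ) (x : ZMod n)
    (f : ZMod n → ℂ) (y : ZMod n) :
    Aelt ξ x f y = ((ξ (y - x) : ℂˣ) : ℂ) * f (y - x) := by
  simp only [Aelt, LinearMap.sum_apply, LinearMap.smul_apply, rankOne, LinearMap.coe_mk,
    AddHom.coe_mk, Finset.sum_apply, Pi.smul_apply, smul_eq_mul]
  rw [Finset.sum_eq_single (y - x)]
  · simp
  · intro i _ hi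
    rw [if_neg, mul_zero]
    intro h; exact hi (by rw [h]; ring)
  · intro h; exact absurd (Finset.mem_univ _) h

/-- For every `(ξ, x)`, the element `A_(ξ,x) = Σ_i ξ(i) e_i^∨ ⊗ e_{i+x}`
is a nonzero simultaneous eigenvector for the adjoint action of `ℤ/n × Hom(ℤ/n, ℂˣ)` on
`End(V_n)`: conjugation by `φ_n(1; a, α)` multiplies `A_(ξ,x)` by `ξ(a)·α(x)`. -/
theorem Aelt_is_eigenvector (n : ℕ) [NeZero n]
    (ξ : AddChar (ZMod n) ℂˣ) (x : ZMod n) :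
    Aelt ξ x ≠ 0 ∧
    ∀ (a : ZMod n) (α : AddChar (ZMod n) ℂˣ),
      (schroedinger ((1 : rootsOfUnity n ℂ), a, α)) ∘ₗ (Aelt ξ x) ∘ₗ
        (schroedinger (heisInv ((1 : rootsOfUnity n ℂ), a, α))) =
      (((ξ a : ℂˣ) : ℂ) * ((α x : ℂˣ) : ℂ)) • Aelt ξ x := by
  refine ⟨fun h => ?_, fun a α => ?_⟩
  · have h1 := Aelt_apply ξ x (fun _ => 1) x
    rw [h] at h1
    simp at h1
  · ext f y
    simp only [LinearMap.comp_apply, schroedinger, heisInv, LinearMap.coe_mk, AddHom.coe_mk,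
      Aelt_apply, LinearMap.smul_apply, Pi.smul_apply, smul_eq_mul, inv_one, one_mul,
      Submonoid.coe_mul, Units.val_mul, AddChar.inv_apply, OneMemClass.coe_one]
    have hξ : ∀ s t : ZMod n, ((ξ (s+t) : ℂˣ) : ℂ) = ((ξ s : ℂˣ) : ℂ) * ((ξ t : ℂˣ) : ℂ) :=
      fun s t => by rw [AddChar.map_add_eq_mul, Units.val_mul]
    have hα : ∀ s t : ZMod n, ((α (s+t) : ℂˣ) : ℂ) = ((α s : ℂˣ) : ℂ) * ((α t : ℂˣ) : ℂ) :=
      fun s t => by rw [AddChar.map_add_eq_mul, Units.val_mul]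
    have hαi : ∀ t : ZMod n, ((α (-t) : ℂˣ) : ℂ) = (((α t : ℂˣ) : ℂ))⁻¹ :=
      fun t => by rw [AddChar.map_neg_eq_inv, Units.val_inv_eq_inv_val]
    rw [show y + a - x + -a = y - x from by ring, Units.val_one, one_mul,
      show y + a - x = (y - x) + a from by ring, hξ, hαi, hα,
      show y - x = y + -x from by ring, hα, hαi]
    have n1 : ((α y : ℂˣ) : ℂ) ≠ 0 := Units.ne_zero _
    have n2 : ((α a : ℂˣ) : ℂ) ≠ 0 := Units.ne_zero _
    have n3 : ((α x : ℂˣ) : ℂ) ≠ 0 := Units.ne_zero _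
    field_simp
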